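/- arXiv:1401.8049 — 3 statements merged into one kernel-verified Lean document; each statement's English description precedes it below -/
import Mathlib

section
/- Let (P_j)_{j≥0} be a strictly decreasing sequence of positive reals, γ > 0, and suppose vectors U^n in a Hilbert space satisfy, for all n ≥ 0, P_0 ‖U^{n+1}‖ ≤ Σ_{j=0}^{n-1} (P_j - P_{j+1}) ‖U^{n-j}‖ + P_n ‖U^0‖ + γ M, where M ≥ 0. If moreover c is a constant with c P_n ≥ γ for all n ≤ N, then for all 1 ≤ n ≤ N+1: ‖U^n‖ ≤ ‖U^0‖ + c M. -/
theorem stmt_13 {H : Type*} [NormedAddCommGroup H] [InnerProductSpace ℝ H]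
    (P : ℕ → ℝ) (hPpos : ∀ j, 0 < P j) (hPanti : StrictAnti P)
    (γ : ℝ) (hγ : 0 < γ) (M : ℝ) (hM : 0 ≤ M)
    (U : ℕ → H)
    (hrec : ∀ n : ℕ, P 0 * ‖U (n + 1)‖ ≤
      (∑ j ∈ Finset.range n, (P j - P (j + 1)) * ‖U (n - j)‖) + P n * ‖U 0‖ + γ * M)
    (N : ℕ) (c : ℝ) (hc : ∀ n ≤ N, γ ≤ c * P n) :
    ∀ n, 1 ≤ n → n ≤ N + 1 → ‖U n‖ ≤ ‖U 0‖ + c * M := by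
  have hc0 : 0 < c := by
    have h := hc 0 (Nat.zero_le _)
    have := hPpos 0
    nlinarith
  intro n
  induction n using Nat.strong_induction_on with
  | _ n ih =>
    intro h1 hN
    obtain ⟨m, rfl⟩ : ∃ m, n = m + 1 := ⟨n - 1, by omega⟩
    have key := hrec m
    have hsum : ∑ j ∈ Finset.range m, (P j - P (j + 1)) * ‖U (m - j)‖ ≤
        ∑ j ∈ Finset.range m, (P j - P (j + 1)) * (‖U 0‖ + c * M) := by
      apply Finset.sum_le_sum
      intro j hj
      have hj' := Finset.mem_range.mp hj
      have hmono : P (j + 1) < P j := hPanti (by omega)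
      have hUle : ‖U (m - j)‖ ≤ ‖U 0‖ + c * M :=
        ih (m - j) (by omega) (by omega) (by omega)
      nlinarith
    have h2 : ∑ j ∈ Finset.range m, (P j - P (j + 1)) * (‖U 0‖ + c * M)
        = (P 0 - P m) * (‖U 0‖ + c * M) := by
      rw [← Finset.sum_mul, Finset.sum_range_sub']
    rw [h2] at hsum
    have hγM : γ ≤ c * P m := hc m (by omega)
    have hP0 := hPpos 0
    have hPm := hPpos m
    have hPle : P m ≤ P 0 := by
      rcases Nat.eq_zero_or_pos m with h | h
      · simp [h]
      · exact le_of_lt (hPanti h)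
    have hnorm : (0:ℝ) ≤ ‖U 0‖ := norm_nonneg _
    nlinarith [key, hsum]
end

section
/- Let 0<β_i<1 and β_0 > 0, and z_1,…,z_m ∈ ℂ. Then 1/Γ(β_0) + Σ_{i=1}^m z_i E_{(β_1,…,β_m),β_0+β_i}(z_1,…,z_m) = E_{(β_1,…,β_m),β_0}(z_1,…,z_m), where E denotes the multinomial Mittag-Leffler function. -/
open Finset

/-- The multinomial Mittag-Leffler function, defined by summing over all
multi-indices `l : Fin m → ℕ`. -/
noncomputable def mML (m : ℕ) (β : Fin m → ℝ) (β₀ : ℝ) (z : Fin m → ℂ) : ℂ :=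
  ∑' l : Fin m → ℕ,
    ((Nat.multinomial Finset.univ l : ℕ) : ℂ) * (∏ i, z i ^ l i) /
      Complex.Gamma (((β₀ + ∑ i, β i * l i : ℝ)) : ℂ)

lemma gamma_lb {x : ℝ} (hx : 0 < x) (hx2 : x ≤ 2) : (1:ℝ)/6 ≤ Real.Gamma x := by
  have hG := Real.Gamma_pos_of_pos hx
  have h1 : Real.Gamma (x + 1) = x * Real.Gamma x := Real.Gamma_add_one hx.ne'
  have h2 : Real.Gamma (x + 2) = (x+1) * Real.Gamma (x+1) := by
    have := Real.Gamma_add_one (show x + 1 ≠ 0 by positivity)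
    rw [show x + 1 + 1 = x + 2 by ring] at this
    exact this
  have h3 : (1:ℝ) ≤ Real.Gamma (x + 2) := by
    have := Real.Gamma_strictMonoOn_Ici.monotoneOn (Set.mem_Ici.2 le_rfl)
      (Set.mem_Ici.2 (by linarith : (2:ℝ) ≤ x + 2)) (by linarith)
    rwa [Real.Gamma_two] at this
  rw [h2, h1] at h3
  have h6 : (x+1)*x ≤ 6 := by nlinarith
  nlinarith [mul_le_mul_of_nonneg_right h6 hG.le]

lemma one_div_gamma_le {t x : ℝ} (ht : 1 ≤ t) (hx : 0 < x) :
    1 / Real.Gamma x ≤ 6 * Real.exp t * t ^ (2 - x) := by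
  have ht0 : 0 < t := by linarith
  have hG : 0 < Real.Gamma x := Real.Gamma_pos_of_pos hx
  have het : 1 ≤ Real.exp t := by
    have := Real.add_one_le_exp t; linarith
  rcases le_or_gt x 2 with h2 | h2
  · have hb : 1 / Real.Gamma x ≤ 6 := by
      rw [div_le_iff₀ hG]
      nlinarith [gamma_lb hx h2]
    have htx : (1:ℝ) ≤ t ^ (2 - x) := by
      have := Real.rpow_le_rpow_of_exponent_le ht (by linarith : (0:ℝ) ≤ 2 - x)
      rwa [Real.rpow_zero] at this
    nlinarith [Real.rpow_pos_of_pos ht0 (2-x)]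
  · set n := ⌊x⌋₊ with hn
    have hn2 : 2 ≤ n := Nat.le_floor (by exact_mod_cast h2.le)
    have hnx : (n:ℝ) ≤ x := Nat.floor_le hx.le
    have hGn : Real.Gamma (n:ℝ) = (Nat.factorial (n-1) : ℝ) := by
      have hc : ((n:ℝ)) = ((n-1 : ℕ) : ℝ) + 1 := by
        rw [Nat.cast_sub (show 1 ≤ n by omega)]
        push_cast
        ring
      rw [hc, Real.Gamma_nat_eq_factorial]
    have hmono : Real.Gamma (n:ℝ) ≤ Real.Gamma x :=
      Real.Gamma_strictMonoOn_Ici.monotoneOn (Set.mem_Ici.2 (by exact_mod_cast hn2))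
        (Set.mem_Ici.2 h2.le) hnx
    have hfacpos : (0:ℝ) < (Nat.factorial (n-1) : ℝ) := by positivity
    have hfac : 1 / Real.Gamma x ≤ 1 / (Nat.factorial (n-1) : ℝ) := by
      apply one_div_le_one_div_of_le hfacpos
      rw [← hGn]; exact hmono
    have hrpow_eq : t ^ ((n:ℝ) - 1) = (t ^ (n-1 : ℕ) : ℝ) := by
      rw [← Real.rpow_natCast t (n-1)]
      congr 1
      push_cast [Nat.cast_sub (show 1 ≤ n by omega)]
      ring
    have hexp : (1:ℝ) / (Nat.factorial (n-1) : ℝ) ≤ Real.exp t / t ^ ((n:ℝ) - 1) := by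
      have h := Real.pow_div_factorial_le_exp t ht0.le (n-1)
      rw [div_le_div_iff₀ hfacpos (Real.rpow_pos_of_pos ht0 _), hrpow_eq]
      rw [div_le_iff₀ hfacpos] at h
      nlinarith [h]
    have hlast : Real.exp t / t ^ ((n:ℝ) - 1) ≤ Real.exp t * t ^ (2 - x) := by
      rw [div_eq_mul_inv, ← Real.rpow_neg ht0.le]
      apply mul_le_mul_of_nonneg_left _ (by positivity)
      apply Real.rpow_le_rpow_of_exponent_le ht
      have := Nat.lt_floor_add_one x
      rw [← hn] at this
      linarith
    have h6 : Real.exp t * t ^ (2 - x) ≤ 6 * Real.exp t * t ^ (2 - x) := by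
      nlinarith [Real.rpow_pos_of_pos ht0 (2-x), het]
    linarith

lemma summable_pi_geom {m : ℕ} (q : Fin m → ℝ) (hq0 : ∀ i, 0 ≤ q i) (hq1 : ∀ i, q i < 1) :
    Summable (fun l : Fin m → ℕ => ∏ i, (q i) ^ l i) := by
  induction m with
  | zero =>
    have : Finite (Fin 0 → ℕ) := Finite.of_subsingleton
    exact Summable.of_finite
  | succ n ih =>
    have he := (Fin.consEquiv (fun _ : Fin (n+1) => ℕ)).summable_iff
      (f := fun l : Fin (n+1) → ℕ => ∏ i, (q i) ^ l i)
    rw [← he]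
    have heq : (fun p : ℕ × (Fin n → ℕ) =>
        (fun l : Fin (n+1) → ℕ => ∏ i, (q i) ^ l i) ((Fin.consEquiv (fun _ : Fin (n+1) => ℕ)) p))
        = fun p : ℕ × (Fin n → ℕ) => (q 0) ^ p.1 * ∏ i : Fin n, (q i.succ) ^ p.2 i := by
      funext p
      simp [Fin.consEquiv, Fin.prod_univ_succ]
    rw [Function.comp_def, heq]
    exact Summable.mul_of_nonneg (f := fun k : ℕ => q 0 ^ k)
      (g := fun l : Fin n → ℕ => ∏ i : Fin n, (q i.succ) ^ l i)
      (summable_geometric_of_lt_one (hq0 0) (hq1 0))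
      (ih (fun i => q i.succ) (fun i => hq0 i.succ) (fun i => hq1 i.succ))
      (fun k => pow_nonneg (hq0 0) k)
      (fun l => Finset.prod_nonneg fun i _ => pow_nonneg (hq0 i.succ) _)

lemma mult_le_pow {m : ℕ} (l : Fin m → ℕ) :
    Nat.multinomial Finset.univ l ≤ m ^ (∑ i, l i) := by
  have h := Finset.sum_pow_eq_sum_piAntidiag (Finset.univ : Finset (Fin m)) (fun _ => (1:ℕ)) (∑ i, l i)
  simp only [one_pow, Finset.prod_const_one, mul_one, Finset.sum_const, card_univ,
    Fintype.card_fin, smul_eq_mul, mul_one] at h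
  have hmem : l ∈ Finset.piAntidiag Finset.univ (∑ i, l i) := by
    rw [Finset.mem_piAntidiag]
    exact ⟨rfl, fun i _ => Finset.mem_univ i⟩
  calc Nat.multinomial Finset.univ l ≤ ∑ k ∈ Finset.piAntidiag Finset.univ (∑ i, l i), Nat.multinomial Finset.univ k :=
        Finset.single_le_sum (fun _ _ => Nat.zero_le _) hmem
    _ = m ^ (∑ i, l i) := by exact_mod_cast h.symm

lemma mult_cast {m : ℕ} (l : Fin m → ℕ) :
    ((Nat.multinomial Finset.univ l : ℕ) : ℝ)
      = (Nat.factorial (∑ i, l i) : ℝ) / ∏ i, (Nat.factorial (l i) : ℝ) := by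
  have h := Nat.multinomial_spec Finset.univ l
  have hp : (0:ℝ) < ∏ i, (Nat.factorial (l i) : ℝ) :=
    Finset.prod_pos fun i _ => by positivity
  rw [eq_div_iff hp.ne', mul_comm]
  exact_mod_cast congrArg (Nat.cast (R := ℝ)) h

lemma pascal_real {m : ℕ} (l : Fin m → ℕ) (hl : l ≠ 0) :
    ∑ i, (if l i = 0 then (0:ℝ) else
      ((Nat.multinomial Finset.univ (Function.update l i (l i - 1)) : ℕ) : ℝ))
      = ((Nat.multinomial Finset.univ l : ℕ) : ℝ) := by
  set k := ∑ i, l i with hk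
  have hk0 : k ≠ 0 := by
    obtain ⟨i0, hi0⟩ := Function.ne_iff.1 hl
    have h1 : l i0 ≤ k := Finset.single_le_sum (fun j _ => Nat.zero_le _) (Finset.mem_univ i0)
    have h2 : l i0 ≠ 0 := hi0
    omega
  have hp : (0:ℝ) < ∏ j, (Nat.factorial (l j) : ℝ) :=
    Finset.prod_pos fun j _ => by positivity
  have key : ∀ i, (if l i = 0 then (0:ℝ) else
      ((Nat.multinomial Finset.univ (Function.update l i (l i - 1)) : ℕ) : ℝ))
      = (l i : ℝ) * ((Nat.factorial (k-1) : ℝ) / ∏ j, (Nat.factorial (l j) : ℝ)) := by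
    intro i
    by_cases hi : l i = 0
    · simp [hi]
    · rw [if_neg hi, mult_cast]
      have hsum_u : ∑ j, Function.update l i (l i - 1) j = k - 1 := by
        rw [Finset.sum_update_of_mem (Finset.mem_univ i), Finset.sdiff_singleton_eq_erase]
        have h1 : l i + ∑ j ∈ Finset.univ.erase i, l j = k := by
          rw [hk, Finset.add_sum_erase _ _ (Finset.mem_univ i)]
        omega
      have hprod_u : (l i : ℝ) * ∏ j, (Nat.factorial (Function.update l i (l i - 1) j) : ℝ)
          = ∏ j, (Nat.factorial (l j) : ℝ) := by
        rw [← Finset.mul_prod_erase _ (fun j => ((Nat.factorial (Function.update l i (l i - 1) j)) : ℝ)) (Finset.mem_univ i),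
          ← Finset.mul_prod_erase _ (fun j => ((Nat.factorial (l j)) : ℝ)) (Finset.mem_univ i)]
        have herase : ∏ j ∈ Finset.univ.erase i, ((Nat.factorial (Function.update l i (l i - 1) j)) : ℝ)
            = ∏ j ∈ Finset.univ.erase i, ((Nat.factorial (l j)) : ℝ) := by
          apply Finset.prod_congr rfl
          intro j hj
          rw [Function.update_of_ne (Finset.ne_of_mem_erase hj)]
        rw [herase, Function.update_self, ← mul_assoc]
        congr 1
        have := Nat.mul_factorial_pred hi
        exact_mod_cast congrArg (Nat.cast (R := ℝ)) this
      have hpu : (0:ℝ) < ∏ j, (Nat.factorial (Function.update l i (l i - 1) j) : ℝ) :=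
        Finset.prod_pos fun j _ => by positivity
      rw [hsum_u, mul_div_assoc', div_eq_div_iff hpu.ne' hp.ne']
      linear_combination (-(Nat.factorial (k-1) : ℝ)) * hprod_u
  rw [Finset.sum_congr rfl (fun i _ => key i), ← Finset.sum_mul, mult_cast]
  have hcast : (∑ i, (l i : ℝ)) = (k : ℝ) := by rw [hk]; push_cast; rfl
  rw [hcast, ← hk]
  have hkf : (k : ℝ) * (Nat.factorial (k-1) : ℝ) = (Nat.factorial k : ℝ) := by
    have := Nat.mul_factorial_pred hk0
    exact_mod_cast congrArg (Nat.cast (R := ℝ)) this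
  rw [mul_div_assoc'] at *
  rw [hkf]

lemma pascal_nat {m : ℕ} (l : Fin m → ℕ) (hl : l ≠ 0) :
    ∑ i, (if l i = 0 then 0 else
      Nat.multinomial Finset.univ (Function.update l i (l i - 1)))
      = Nat.multinomial Finset.univ l := by
  have h := pascal_real l hl
  apply Nat.cast_injective (R := ℝ)
  push_cast [apply_ite (Nat.cast (R := ℝ))] at h ⊢
  convert h using 2







lemma ml_norm {m : ℕ} (l : Fin m → ℕ) (z : Fin m → ℂ) {x : ℝ} (hx : 0 < x) :
    ‖((Nat.multinomial Finset.univ l : ℕ) : ℂ) * (∏ i, z i ^ l i) / Complex.Gamma ((x : ℝ) : ℂ)‖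
      = ((Nat.multinomial Finset.univ l : ℕ) : ℝ) * (∏ i, ‖z i‖ ^ l i) / Real.Gamma x := by
  rw [norm_div, norm_mul, Complex.Gamma_ofReal, Complex.norm_real,
    Real.norm_eq_abs, abs_of_pos (Real.Gamma_pos_of_pos hx), norm_prod]
  simp [Complex.norm_natCast, norm_pow]

lemma ml_summable {m : ℕ} (β : Fin m → ℝ) (hβ : ∀ i, 0 < β i) {c : ℝ} (hc : 0 < c)
    (z : Fin m → ℂ) :
    Summable (fun l : Fin m → ℕ =>
      ((Nat.multinomial Finset.univ l : ℕ) : ℂ) * (∏ i, z i ^ l i) /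
        Complex.Gamma ((c + ∑ i, β i * l i : ℝ) : ℂ)) := by
  apply Summable.of_norm
  obtain ⟨t, ht1, hti⟩ : ∃ t : ℝ, 1 ≤ t ∧ ∀ i, (2 * m * ‖z i‖ + 1) ^ (1 / β i) ≤ t := by
    refine ⟨1 + ∑ i, max 0 ((2 * m * ‖z i‖ + 1) ^ (1 / β i)), ?_, ?_⟩
    · have h : (0:ℝ) ≤ ∑ i, max 0 ((2 * m * ‖z i‖ + 1) ^ (1 / β i)) :=
        Finset.sum_nonneg fun i _ => le_max_left _ _
      linarith
    · intro i
      have h1 : (2 * m * ‖z i‖ + 1) ^ (1 / β i)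
          ≤ max 0 ((2 * m * ‖z i‖ + 1) ^ (1 / β i)) := le_max_right _ _
      have h2 := Finset.single_le_sum
        (f := fun j => max 0 ((2 * m * ‖z j‖ + 1) ^ (1 / β j)))
        (fun j _ => le_max_left _ _) (Finset.mem_univ i)
      linarith
  have ht0 : 0 < t := by linarith
  have htb : ∀ i, 2 * m * ‖z i‖ + 1 ≤ t ^ (β i) := by
    intro i
    have hb0 : (0:ℝ) ≤ 2 * m * ‖z i‖ + 1 := by positivity
    have h := Real.rpow_le_rpow (Real.rpow_nonneg hb0 _) (hti i) (hβ i).le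
    rwa [← Real.rpow_mul hb0, one_div_mul_cancel (hβ i).ne', Real.rpow_one] at h
  -- the majorant
  set q : Fin m → ℝ := fun i => m * ‖z i‖ * t ^ (-β i) with hq
  have htpos : ∀ a : ℝ, 0 < t ^ a := fun a => Real.rpow_pos_of_pos ht0 a
  have hq0 : ∀ i, 0 ≤ q i := fun i => by
    have := (htpos (-β i)).le
    positivity
  have hq1 : ∀ i, q i < 1 := by
    intro i
    rw [hq]
    have h1 : (m : ℝ) * ‖z i‖ * t ^ (-β i) < (2 * m * ‖z i‖ + 1) * t ^ (-β i) := by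
      have hlt : (m : ℝ) * ‖z i‖ < 2 * m * ‖z i‖ + 1 := by
        nlinarith [norm_nonneg (z i), Nat.cast_nonneg (α := ℝ) m]
      exact mul_lt_mul_of_pos_right hlt (htpos _)
    have h2 : (2 * m * ‖z i‖ + 1) * t ^ (-β i) ≤ t ^ (β i) * t ^ (-β i) :=
      mul_le_mul_of_nonneg_right (htb i) (htpos _).le
    have h3 : t ^ (β i) * t ^ (-β i) = 1 := by
      rw [← Real.rpow_add ht0]; simp
    calc (m : ℝ) * ‖z i‖ * t ^ (-β i) < _ := h1
      _ ≤ 1 := h3 ▸ h2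
  set K : ℝ := 6 * Real.exp t * t ^ (2 - c) with hK
  have hsum : Summable (fun l : Fin m → ℕ => K * ∏ i, (q i) ^ l i) :=
    (summable_pi_geom q hq0 hq1).mul_left K
  apply Summable.of_nonneg_of_le (fun l => norm_nonneg _) _ hsum
  intro l
  have hx : 0 < c + ∑ i, β i * l i :=
    add_pos_of_pos_of_nonneg hc (Finset.sum_nonneg fun i _ =>
      mul_nonneg (hβ i).le (Nat.cast_nonneg _))
  rw [ml_norm l z hx]
  have hA0 : (0:ℝ) ≤ ((Nat.multinomial Finset.univ l : ℕ) : ℝ) * (∏ i, ‖z i‖ ^ l i) := by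
    positivity
  have hG := one_div_gamma_le ht1 hx
  have step1 : ((Nat.multinomial Finset.univ l : ℕ) : ℝ) * (∏ i, ‖z i‖ ^ l i) / Real.Gamma (c + ∑ i, β i * l i)
      ≤ ((Nat.multinomial Finset.univ l : ℕ) : ℝ) * (∏ i, ‖z i‖ ^ l i) * (6 * Real.exp t * t ^ (2 - (c + ∑ i, β i * l i))) := by
    rw [div_eq_mul_one_div]
    exact mul_le_mul_of_nonneg_left hG hA0
  refine step1.trans ?_
  -- rewrite RHS target
  have hrpow_split : t ^ (2 - (c + ∑ i, β i * l i)) = t ^ (2 - c) * ∏ i, (t ^ (-β i)) ^ (l i) := by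
    have h1 : ∀ i, (t ^ (-β i)) ^ (l i) = t ^ (-(β i * l i)) := by
      intro i
      rw [← Real.rpow_natCast (t ^ (-β i)) (l i), ← Real.rpow_mul ht0.le]
      ring_nf
    rw [Finset.prod_congr rfl (fun i _ => h1 i)]
    have h2 : ∏ i, t ^ (-(β i * (l i : ℝ))) = t ^ (∑ i, -(β i * (l i : ℝ))) := by
      rw [← Real.rpow_sum_of_pos ht0]
    rw [h2, ← Real.rpow_add ht0]
    congr 1
    simp only [Finset.sum_neg_distrib]
    ring
  have hmult : ((Nat.multinomial Finset.univ l : ℕ) : ℝ) ≤ ∏ i, (m:ℝ) ^ l i := by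
    rw [Finset.prod_pow_eq_pow_sum]
    exact_mod_cast mult_le_pow l
  calc ((Nat.multinomial Finset.univ l : ℕ) : ℝ) * (∏ i, ‖z i‖ ^ l i) * (6 * Real.exp t * t ^ (2 - (c + ∑ i, β i * l i)))
      = K * (((Nat.multinomial Finset.univ l : ℕ) : ℝ) * ∏ i, (‖z i‖ ^ l i * (t ^ (-β i)) ^ l i)) := by
        rw [hrpow_split, Finset.prod_mul_distrib, hK]; ring
    _ ≤ K * ((∏ i, (m:ℝ) ^ l i) * ∏ i, (‖z i‖ ^ l i * (t ^ (-β i)) ^ l i)) := by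
        apply mul_le_mul_of_nonneg_left _ (by positivity)
        apply mul_le_mul_of_nonneg_right hmult
        exact Finset.prod_nonneg fun i _ => by positivity
    _ = K * ∏ i, (q i) ^ l i := by
        rw [← Finset.prod_mul_distrib]
        congr 1
        apply Finset.prod_congr rfl
        intro i _
        rw [hq, mul_pow, mul_pow]
        ring





lemma prod_update_succ {m : ℕ} (z : Fin m → ℂ) (l : Fin m → ℕ) (i : Fin m) :
    ∏ j, z j ^ (Function.update l i (l i + 1) j) = z i * ∏ j, z j ^ l j := by
  rw [← Finset.mul_prod_erase _ (fun j => z j ^ (Function.update l i (l i + 1) j)) (Finset.mem_univ i),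
    ← Finset.mul_prod_erase _ (fun j => z j ^ l j) (Finset.mem_univ i)]
  have h : ∏ j ∈ Finset.univ.erase i, z j ^ (Function.update l i (l i + 1) j)
      = ∏ j ∈ Finset.univ.erase i, z j ^ l j :=
    Finset.prod_congr rfl fun j hj => by
      rw [Function.update_of_ne (Finset.ne_of_mem_erase hj)]
  rw [h, Function.update_self, pow_succ]
  ring

lemma sum_update_succ {m : ℕ} (β : Fin m → ℝ) (l : Fin m → ℕ) (i : Fin m) :
    ∑ j, β j * ((Function.update l i (l i + 1) j : ℕ) : ℝ) = β i + ∑ j, β j * (l j : ℝ) := by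
  rw [← Finset.add_sum_erase _ (fun j => β j * ((Function.update l i (l i + 1) j : ℕ) : ℝ)) (Finset.mem_univ i),
    ← Finset.add_sum_erase _ (fun j => β j * ((l j : ℕ) : ℝ)) (Finset.mem_univ i)]
  have h : ∑ j ∈ Finset.univ.erase i, β j * ((Function.update l i (l i + 1) j : ℕ) : ℝ)
      = ∑ j ∈ Finset.univ.erase i, β j * ((l j : ℕ) : ℝ) :=
    Finset.sum_congr rfl fun j hj => by
      rw [Function.update_of_ne (Finset.ne_of_mem_erase hj)]
  rw [h, Function.update_self]
  push_cast
  ring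

theorem stmt_15 (m : ℕ) (β : Fin m → ℝ) (hβ : ∀ i, 0 < β i ∧ β i < 1)
    (β₀ : ℝ) (hβ₀ : 0 < β₀) (z : Fin m → ℂ) :
    1 / Complex.Gamma (β₀ : ℂ) + ∑ i, z i * mML m β (β₀ + β i) z = mML m β β₀ z := by
  classical
  set F : (Fin m → ℕ) → ℂ := fun l =>
    ((Nat.multinomial Finset.univ l : ℕ) : ℂ) * (∏ i, z i ^ l i) /
      Complex.Gamma (((β₀ + ∑ i, β i * l i : ℝ)) : ℂ) with hF
  have hFs : Summable F := ml_summable β (fun i => (hβ i).1) hβ₀ z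
  set σ : Fin m → (Fin m → ℕ) → (Fin m → ℕ) := fun i l => Function.update l i (l i + 1) with hσ
  have hσinj : ∀ i, Function.Injective (σ i) := by
    intro i l l' h
    funext j
    by_cases hj : j = i
    · subst hj
      have := congrFun h j
      simpa [hσ, Function.update_self] using this
    · have := congrFun h j
      simpa [hσ, Function.update_of_ne hj] using this
  set H : Fin m → (Fin m → ℕ) → ℂ := fun i l =>
    if l i = 0 then 0 else
      ((Nat.multinomial Finset.univ (Function.update l i (l i - 1)) : ℕ) : ℂ) *
        (∏ j, z j ^ l j) / Complex.Gamma (((β₀ + ∑ j, β j * l j : ℝ)) : ℂ) with hH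
  have claim1 : ∀ i l, H i (σ i l) = z i *
      (((Nat.multinomial Finset.univ l : ℕ) : ℂ) * (∏ j, z j ^ l j) /
        Complex.Gamma ((((β₀ + β i) + ∑ j, β j * l j : ℝ)) : ℂ)) := by
    intro i l
    have h1 : (σ i l) i = l i + 1 := Function.update_self i (l i + 1) l
    have h2 : Function.update (σ i l) i (l i + 1 - 1) = l := by
      rw [hσ]
      simp only [Nat.add_sub_cancel]
      rw [Function.update_idem, Function.update_eq_self]
    have h3 : ∑ j, β j * (((σ i l) j : ℕ) : ℝ) = β i + ∑ j, β j * (l j : ℝ) :=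
      sum_update_succ β l i
    have h4 : ∏ j, z j ^ ((σ i l) j) = z i * ∏ j, z j ^ l j := prod_update_succ z l i
    rw [hH]
    simp only [h1, Nat.add_eq_zero, one_ne_zero, and_false, if_false]
    rw [h2, h3, h4]
    have harg : β₀ + (β i + ∑ j, β j * (l j : ℝ)) = (β₀ + β i) + ∑ j, β j * (l j : ℝ) := by ring
    rw [harg]
    ring
  have claim2 : ∀ i, ∀ l, l ∉ Set.range (σ i) → H i l = 0 := by
    intro i l hl
    by_cases h0 : l i = 0
    · rw [hH]; simp [h0]
    · exfalso
      apply hl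
      refine ⟨Function.update l i (l i - 1), ?_⟩
      rw [hσ]
      simp only [Function.update_self]
      rw [Function.update_idem]
      have : l i - 1 + 1 = l i := Nat.succ_pred_eq_of_pos (Nat.pos_of_ne_zero h0)
      rw [this, Function.update_eq_self]
  have hGs : ∀ i, Summable (fun l : Fin m → ℕ =>
      ((Nat.multinomial Finset.univ l : ℕ) : ℂ) * (∏ j, z j ^ l j) /
        Complex.Gamma ((((β₀ + β i) + ∑ j, β j * l j : ℝ)) : ℂ)) := fun i =>
    ml_summable β (fun j => (hβ j).1) (add_pos hβ₀ (hβ i).1) z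
  have hHσ : ∀ i, (H i ∘ σ i) = fun l => z i *
      (((Nat.multinomial Finset.univ l : ℕ) : ℂ) * (∏ j, z j ^ l j) /
        Complex.Gamma ((((β₀ + β i) + ∑ j, β j * l j : ℝ)) : ℂ)) := by
    intro i; funext l; exact claim1 i l
  have hHs : ∀ i, Summable (H i) := by
    intro i
    rw [← (hσinj i).summable_iff (claim2 i)]
    rw [hHσ i]
    exact (hGs i).mul_left (z i)
  have stepA : ∀ i, z i * mML m β (β₀ + β i) z = ∑' l, H i l := by
    intro i
    have h1 : mML m β (β₀ + β i) z = ∑' l, 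
        (((Nat.multinomial Finset.univ l : ℕ) : ℂ) * (∏ j, z j ^ l j) /
          Complex.Gamma ((((β₀ + β i) + ∑ j, β j * l j : ℝ)) : ℂ)) := rfl
    rw [h1, ← tsum_mul_left]
    have h2 := (hσinj i).tsum_eq (f := H i) (fun x hx => by_contra fun hc => hx (claim2 i x hc))
    rw [← h2]
    exact tsum_congr fun l => (claim1 i l).symm
  have stepB : ∑ i, ∑' l, H i l = ∑' l, ∑ i, H i l :=
    (Summable.tsum_finsetSum (fun i _ => hHs i)).symm
  have stepC : ∀ l, ∑ i, H i l = if l = 0 then 0 else F l := by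
    intro l
    by_cases h0 : l = 0
    · subst h0
      rw [if_pos rfl]
      apply Finset.sum_eq_zero
      intro i _
      rw [hH]
      simp
    · rw [if_neg h0]
      have hterm : ∀ i, H i l = (if l i = 0 then (0:ℂ) else
          ((Nat.multinomial Finset.univ (Function.update l i (l i - 1)) : ℕ) : ℂ)) *
          ((∏ j, z j ^ l j) / Complex.Gamma (((β₀ + ∑ j, β j * l j : ℝ)) : ℂ)) := by
        intro i
        rw [hH]
        by_cases hi : l i = 0
        · simp [hi]
        · simp only [hi, if_false]
          rw [mul_div_assoc]
      rw [Finset.sum_congr rfl fun i _ => hterm i, ← Finset.sum_mul]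
      have hps : (∑ i, (if l i = 0 then (0:ℂ) else
          ((Nat.multinomial Finset.univ (Function.update l i (l i - 1)) : ℕ) : ℂ)))
          = ((Nat.multinomial Finset.univ l : ℕ) : ℂ) := by
        have h := pascal_nat l h0
        push_cast [apply_ite (Nat.cast (R := ℂ))] at h ⊢
        convert congrArg (Nat.cast (R := ℂ)) h using 2 <;> push_cast <;> simp [apply_ite (Nat.cast (R := ℂ))]
      rw [hps, ← mul_div_assoc]
  have hF0 : F 0 = 1 / Complex.Gamma (β₀ : ℂ) := by
    rw [hF]
    have hm : Nat.multinomial Finset.univ (0 : Fin m → ℕ) = 1 := by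
      have h := Nat.multinomial_spec Finset.univ (0 : Fin m → ℕ)
      simpa using h
    simp only [Pi.zero_apply, hm, Nat.cast_one, pow_zero, Finset.prod_const_one,
      Nat.cast_zero, mul_zero, Finset.sum_const_zero, add_zero, one_mul, mul_one]
  have stepD : mML m β β₀ z = F 0 + ∑' l, (if l = 0 then 0 else F l) := by
    have h := Summable.tsum_eq_add_tsum_ite hFs 0
    exact h
  rw [stepD, hF0]
  congr 1
  rw [Finset.sum_congr rfl fun i _ => stepA i, stepB]
  exact tsum_congr stepC
end

section
/- Let α ∈ (0,1) and let u: [0,T] → ℝ be twice continuously differentiable. For a uniform partition t_j = jτ, τ = T/K, define the L1 approximation D_τ^α u(t_{n+1}) = (1/Γ(2-α)) Σ_{j=0}^{n} d_{α,j} (u(t_{n+1-j}) - u(t_{n-j}))/τ^α with d_{α,j} = (j+1)^{1-α} - j^{1-α}. Then the Caputo derivative ∂_t^α u(t_{n+1}) = (1/Γ(1-α)) ∫_0^{t_{n+1}} (t_{n+1}-s)^{-α} u'(s) ds satisfies |∂_t^α u(t_{n+1}) - D_τ^α u(t_{n+1})| ≤ C (max_{[0,T]} |u''|) τ^{2-α},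 with C depending only on α. -/
open Set intervalIntegral MeasureTheory
set_option maxHeartbeats 1000000

lemma w_integrable (α : ℝ) (hα1 : α < 1) (c a b : ℝ) :
    IntervalIntegrable (fun s => (c - s) ^ (-α)) volume a b := by
  have h := (intervalIntegrable_rpow' (a := c - a) (b := c - b)
    (show (-1:ℝ) < -α by linarith)).comp_sub_left c
  simp only [sub_sub_cancel] at h
  exact h

lemma w_integral (α : ℝ) (hα1 : α < 1) (c a b : ℝ) :
    ∫ s in a..b, (c - s) ^ (-α) = ((c - a) ^ (1 - α) - (c - b) ^ (1 - α)) / (1 - α) := by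
  rw [show (∫ s in a..b, (c - s) ^ (-α)) = ∫ s in a..b, (fun x => x ^ (-α)) (c - s) from rfl,
    intervalIntegral.integral_comp_sub_left (fun x => x ^ (-α)) c,
    integral_rpow (Or.inl (show (-1:ℝ) < -α by linarith))]
  rw [show -α + 1 = 1 - α by ring]

lemma step_bound (α : ℝ) (hα0 : 0 < α) (x : ℝ) (hx : 0 < x) :
    α * (x + 1) ^ (-1 - α) ≤ x ^ (-α) - (x + 1) ^ (-α) := by
  obtain ⟨ξ, hξ, hslope⟩ := exists_hasDerivAt_eq_slope (fun y => y ^ (-α))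
    (fun y => -α * y ^ (-α - 1)) (show x < x + 1 by linarith)
    (fun y hy => (Real.continuousAt_rpow_const y (-α)
      (Or.inl (by rintro rfl; simp at hy; linarith [hy.1]))).continuousWithinAt)
    (fun y hy => Real.hasDerivAt_rpow_const (Or.inl (by rintro rfl; simp at hy; linarith [hy.1])))
  have hξ1 : 0 < ξ := lt_trans hx hξ.1
  have h2 : x ^ (-α) - (x + 1) ^ (-α) = α * ξ ^ (-α - 1) := by
    rw [show x + 1 - x = 1 by ring, div_one] at hslope
    nlinarith [hslope]
  rw [h2]
  have h3 : (x + 1) ^ (-1 - α) ≤ ξ ^ (-α - 1) := by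
    rw [show (-1 - α) = (-α - 1) by ring]
    exact Real.rpow_le_rpow_of_nonpos hξ1 (le_of_lt hξ.2) (by linarith)
  nlinarith

lemma zeta_bound (α : ℝ) (hα0 : 0 < α) (n : ℕ) :
    ∑ k ∈ Finset.range n, ((k : ℝ) + 1) ^ (-1 - α) ≤ 1 + 1 / α := by
  rcases n with _ | m
  · simp; positivity
  rw [Finset.sum_range_succ']
  have h1 : ∑ k ∈ Finset.range m, ((↑(k+1) : ℝ) + 1) ^ (-1 - α)
      ≤ ∑ k ∈ Finset.range m, ((((k:ℝ)+1) ^ (-α) - ((k:ℝ)+1+1) ^ (-α)) / α) := by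
    apply Finset.sum_le_sum
    intro k _
    rw [le_div_iff₀ hα0]
    push_cast
    calc ((k:ℝ)+1+1) ^ (-1-α) * α = α * (((k:ℝ)+1) + 1) ^ (-1-α) := by ring
    _ ≤ ((k:ℝ)+1) ^ (-α) - (((k:ℝ)+1)+1) ^ (-α) := step_bound α hα0 _ (by positivity)
  have h2 : ∑ k ∈ Finset.range m, ((((k:ℝ)+1) ^ (-α) - ((k:ℝ)+1+1) ^ (-α)) / α)
      = (((0:ℝ)+1) ^ (-α) - ((m:ℝ)+1) ^ (-α)) / α := by
    rw [← Finset.sum_div]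
    congr 1
    have := Finset.sum_range_sub' (fun k : ℕ => ((k:ℝ)+1) ^ (-α)) m
    push_cast at this ⊢
    linarith [this]
  have h3 : (0:ℝ) ≤ ((m:ℝ)+1) ^ (-α) := Real.rpow_nonneg (by positivity) _
  have h4 : ((0:ℝ)+1) ^ (-α) = 1 := by norm_num
  have h5 : ((↑(0:ℕ):ℝ) + 1) ^ (-1-α) = 1 := by norm_num
  push_cast at h1 ⊢
  rw [h4] at h2
  have := h1.trans (le_of_eq h2)
  have h6 : (1 - ((m:ℝ)+1) ^ (-α)) / α ≤ 1/α :=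
    (div_le_div_iff_of_pos_right hα0).mpr (by linarith)
  calc ∑ x ∈ Finset.range m, ((x:ℝ) + 1 + 1) ^ (-1 - α) + ((0:ℝ) + 1) ^ (-1 - α)
      ≤ (1 - ((m:ℝ)+1) ^ (-α)) / α + 1 := by
        rw [show ((0:ℝ)+1) ^ (-1-α) = 1 by norm_num]; linarith
    _ ≤ 1 + 1/α := by linarith

theorem stmt_16 (α : ℝ) (hα0 : 0 < α) (hα1 : α < 1) :
    ∃ C : ℝ, 0 < C ∧
      ∀ (T : ℝ) (K : ℕ) (u : ℝ → ℝ) (M : ℝ), 0 < T → 0 < K →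
        ContDiff ℝ 2 u →
        (∀ s ∈ Icc (0 : ℝ) T, |iteratedDeriv 2 u s| ≤ M) →
        ∀ n : ℕ, n + 1 ≤ K →
          let τ := T / K
          let t : ℕ → ℝ := fun j => j * τ
          |(1 / Real.Gamma (1 - α)) *
              (∫ s in (0 : ℝ)..t (n + 1), (t (n + 1) - s) ^ (-α) * deriv u s)
            - (1 / Real.Gamma (2 - α)) *
              (∑ j ∈ Finset.range (n + 1),
                (((j : ℝ) + 1) ^ (1 - α) - (j : ℝ) ^ (1 - α)) *
                  (u (t (n + 1 - j)) - u (t (n - j))) / τ ^ α)|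
          ≤ C * M * τ ^ (2 - α) := by
  have h1α : (0:ℝ) < 1 - α := by linarith
  have hΓ1 : 0 < Real.Gamma (1 - α) := Real.Gamma_pos_of_pos h1α
  refine ⟨(1 / Real.Gamma (1 - α)) * (1/(1-α) + α + 1), by positivity, ?_⟩
  intro T K u M hT hK hu hM n hn τ t
  have hKpos : (0:ℝ) < K := Nat.cast_pos.mpr hK
  have hτ : 0 < τ := div_pos hT hKpos
  have ht : ∀ j : ℕ, t j = j * τ := fun j => rfl
  have htmono : ∀ j k : ℕ, j ≤ k → t j ≤ t k := by
    intro j k hjk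
    simp only [ht]
    have : (j:ℝ) ≤ k := Nat.cast_le.mpr hjk
    nlinarith
  have htlt : ∀ j : ℕ, t j < t (j+1) := by
    intro j
    simp only [ht]
    push_cast
    nlinarith
  have hlen : ∀ j : ℕ, t (j+1) - t j = τ := by
    intro j; simp only [ht]; push_cast; ring
  have ht0 : t 0 = 0 := by simp [ht]
  have htT : t (n+1) ≤ T := by
    have h1 : ((n:ℝ)+1) ≤ K := by exact_mod_cast hn
    have : t (n+1) = ((n:ℝ)+1) * τ := by simp [ht]
    rw [this]
    calc ((n:ℝ)+1) * τ ≤ K * τ := by nlinarith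
    _ = T := by simp only [τ]; field_simp
  set c := t (n+1) with hc
  set w : ℝ → ℝ := fun s => (c - s) ^ (-α) with hw
  set δ : ℕ → ℝ := fun j => (u (t (j+1)) - u (t j)) / τ with hδ
  -- smoothness facts
  have hud : Differentiable ℝ u := hu.differentiable (by norm_num)
  have hu1 : ContDiff ℝ 1 (deriv u) := by
    have hu2 : ContDiff ℝ ((1:ℕ∞)+1) u := by
      convert hu using 2
      norm_num
    exact (contDiff_succ_iff_deriv.mp hu2).2.2
  have hud2 : Differentiable ℝ (deriv u) := hu1.differentiable one_ne_zero
  have hcont' : Continuous (deriv u) := hu1.continuous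
  have hM' : ∀ s ∈ Icc (0:ℝ) T, |deriv (deriv u) s| ≤ M := by
    intro s hs
    have := hM s hs
    rwa [show (2:ℕ) = 1 + 1 from rfl, iteratedDeriv_succ, iteratedDeriv_one] at this
  have hM0 : 0 ≤ M := le_trans (abs_nonneg _) (hM' 0 ⟨le_refl _, hT.le⟩)
  -- interval inclusion
  have hIcc : ∀ j : ℕ, j ≤ n → Icc (t j) (t (j+1)) ⊆ Icc 0 T := by
    intro j hj x hx
    constructor
    · calc (0:ℝ) = t 0 := ht0.symm
      _ ≤ t j := htmono 0 j (Nat.zero_le _)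
      _ ≤ x := hx.1
    · calc x ≤ t (j+1) := hx.2
      _ ≤ t (n+1) := htmono _ _ (by omega)
      _ ≤ T := htT
  -- MVT bound for deriv u minus difference quotient
  have hgb : ∀ j : ℕ, j ≤ n → ∀ s ∈ Icc (t j) (t (j+1)), |deriv u s - δ j| ≤ M * τ := by
    intro j hj s hs
    obtain ⟨ξ, hξmem, hξ⟩ := exists_hasDerivAt_eq_slope u (deriv u) (htlt j)
      hud.continuous.continuousOn (fun x _ => (hud x).hasDerivAt)
    have hδξ : δ j = deriv u ξ := by
      rw [hξ, hδ, hlen j]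
    rw [hδξ]
    have hξIcc : ξ ∈ Icc (t j) (t (j+1)) := ⟨hξmem.1.le, hξmem.2.le⟩
    have key := Convex.norm_image_sub_le_of_norm_hasDerivWithin_le
      (f := deriv u) (f' := deriv (deriv u)) (s := Icc (0:ℝ) T)
      (fun x _ => (hud2 x).hasDerivAt.hasDerivWithinAt)
      (fun x hx => hM' x hx) (convex_Icc _ _) (hIcc j hj hξIcc) (hIcc j hj hs)
    have h2 : |s - ξ| ≤ τ := by
      rw [abs_le]
      constructor
      · have := hs.1; have := hξIcc.2; have := hlen j; linarith
      · have := hs.2; have := hξIcc.1; have := hlen j; linarith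
    calc |deriv u s - deriv u ξ| ≤ M * |s - ξ| := key
    _ ≤ M * τ := by nlinarith
  -- integrability
  have hwi : ∀ a b : ℝ, IntervalIntegrable w volume a b := fun a b => w_integrable α hα1 c a b
  have hFi : ∀ a b : ℝ, IntervalIntegrable (fun s => w s * deriv u s) volume a b :=
    fun a b => (hwi a b).mul_continuousOn hcont'.continuousOn
  have hGi : ∀ (j : ℕ) (a b : ℝ),
      IntervalIntegrable (fun s => w s * (deriv u s - δ j)) volume a b :=
    fun j a b => (hwi a b).mul_continuousOn (hcont'.sub continuous_const).continuousOn
  -- splitting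
  have hsplit : (∑ j ∈ Finset.range (n+1), ∫ s in t j..t (j+1), w s * deriv u s)
      = ∫ s in (0:ℝ)..c, w s * deriv u s := by
    have := intervalIntegral.sum_integral_adjacent_intervals (a := t) (μ := volume)
      (n := n+1) (fun k _ => hFi (t k) (t (k+1)))
    rwa [ht0] at this
  -- FTC
  have hftc : ∀ j : ℕ, ∫ s in t j..t (j+1), deriv u s = u (t (j+1)) - u (t j) :=
    fun j => intervalIntegral.integral_deriv_eq_sub (fun x _ => hud x)
      (hcont'.intervalIntegrable _ _)
  -- distances to c
  have hcj : ∀ j : ℕ, j ≤ n+1 → c - t j = ((n:ℝ)+1-j) * τ := by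
    intro j hj
    simp only [hc, ht]
    push_cast
    ring
  -- weight integral values
  have hwval : ∀ j : ℕ, j ≤ n → ∫ s in t j..t (j+1), w s
      = (((n:ℝ)+1-j) ^ (1-α) - ((n:ℝ)-j) ^ (1-α)) * τ ^ (1-α) / (1-α) := by
    intro j hj
    have e1 : c - t j = ((n:ℝ)+1-j) * τ := hcj j (by omega)
    have e2 : c - t (j+1) = ((n:ℝ)-j) * τ := by
      rw [hcj (j+1) (by omega)]; push_cast; ring
    have hn1 : (0:ℝ) ≤ (n:ℝ)+1-j := by
      have : (j:ℝ) ≤ n := Nat.cast_le.mpr hj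
      linarith
    have hn2 : (0:ℝ) ≤ (n:ℝ)-j := by
      have : (j:ℝ) ≤ n := Nat.cast_le.mpr hj
      linarith
    rw [hw]
    rw [w_integral α hα1 c (t j) (t (j+1)), e1, e2,
      Real.mul_rpow hn1 hτ.le, Real.mul_rpow hn2 hτ.le]
    ring
  have hτα : (0:ℝ) < τ ^ α := Real.rpow_pos_of_pos hτ α
  have hΓ2 : Real.Gamma (2-α) = (1-α) * Real.Gamma (1-α) := by
    rw [show (2-α) = (1-α)+1 by ring, Real.Gamma_add_one (ne_of_gt h1α)]
  -- the discrete sum as a sum of weight integrals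
  have hSz : (1 / Real.Gamma (2 - α)) *
        (∑ j ∈ Finset.range (n + 1),
          (((j : ℝ) + 1) ^ (1 - α) - (j : ℝ) ^ (1 - α)) *
            (u (t (n + 1 - j)) - u (t (n - j))) / τ ^ α)
      = (1 / Real.Gamma (1 - α)) *
          ∑ j ∈ Finset.range (n+1), (∫ s in t j..t (j+1), w s) * δ j := by
    rw [← Finset.sum_range_reflect (fun j => (((j : ℝ) + 1) ^ (1 - α) - (j : ℝ) ^ (1 - α)) *
            (u (t (n + 1 - j)) - u (t (n - j))) / τ ^ α) (n+1)]
    rw [Finset.mul_sum, Finset.mul_sum]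
    apply Finset.sum_congr rfl
    intro j hj
    have hjn : j ≤ n := Nat.lt_succ_iff.mp (Finset.mem_range.mp hj)
    have e0 : n + 1 - 1 - j = n - j := by omega
    have e1 : n + 1 - (n - j) = j + 1 := by omega
    have e2 : n - (n - j) = j := by omega
    rw [e0, e1, e2]
    have e3 : ((n - j : ℕ) : ℝ) = (n:ℝ) - j := by
      rw [Nat.cast_sub hjn]
    rw [e3, hwval j hjn, hΓ2, hδ]
    have hτfact : τ ^ (1-α) = τ / τ ^ α := by
      rw [Real.rpow_sub hτ, Real.rpow_one]
    rw [hτfact]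
    field_simp
    ring
  have hkey : (1 / Real.Gamma (1 - α)) * (∫ s in (0:ℝ)..c, w s * deriv u s)
      - (1 / Real.Gamma (2 - α)) *
        (∑ j ∈ Finset.range (n + 1),
          (((j : ℝ) + 1) ^ (1 - α) - (j : ℝ) ^ (1 - α)) *
            (u (t (n + 1 - j)) - u (t (n - j))) / τ ^ α)
      = (1 / Real.Gamma (1 - α)) *
          ∑ j ∈ Finset.range (n+1), ∫ s in t j..t (j+1), w s * (deriv u s - δ j) := by
    rw [← hsplit, hSz, ← mul_sub]
    congr 1
    rw [← Finset.sum_sub_distrib]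
    apply Finset.sum_congr rfl
    intro j hj
    have hmul : EqOn (fun s => w s * (deriv u s - δ j))
        (fun s => w s * deriv u s - w s * δ j) (uIcc (t j) (t (j+1))) := by
      intro s _
      simp only
      ring
    rw [intervalIntegral.integral_congr hmul,
      intervalIntegral.integral_sub (hFi _ _) ((hwi _ _).mul_const _),
      intervalIntegral.integral_mul_const]
  have hτ2 : τ ^ ((2:ℝ)-α) = τ ^ ((1:ℝ)-α) * τ := by
    rw [show (2-α:ℝ) = (1-α)+1 by ring, Real.rpow_add hτ, Real.rpow_one]
  have hwnn : ∀ s : ℝ, s ≤ c → 0 ≤ w s := by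
    intro s hs
    exact Real.rpow_nonneg (by linarith) _
  have hEn : |∫ s in t n..t (n+1), w s * (deriv u s - δ n)| ≤ M * τ^((2:ℝ)-α) / (1-α) := by
    have hae : ∀ᵐ x ∂(volume.restrict (Set.uIoc (t n) (t (n+1)))),
        ‖w x * (deriv u x - δ n)‖ ≤ w x * (M * τ) := by
      refine (MeasureTheory.ae_restrict_mem measurableSet_uIoc).mono ?_
      intro x hx
      rw [uIoc_of_le (htlt n).le] at hx
      have hxIcc : x ∈ Icc (t n) (t (n+1)) := Ioc_subset_Icc_self hx
      have hwx : 0 ≤ w x := hwnn x (by rw [hc]; exact hxIcc.2)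
      rw [Real.norm_eq_abs, abs_mul, abs_of_nonneg hwx]
      exact mul_le_mul_of_nonneg_left (hgb n le_rfl x hxIcc) hwx
    have hb := intervalIntegral.norm_integral_le_of_norm_le (htlt n).le
      (by rw [← uIoc_of_le (htlt n).le]; exact (ae_restrict_iff' measurableSet_uIoc).mp hae)
      ((hwi _ _).mul_const _)
    rw [intervalIntegral.integral_mul_const, hwval n le_rfl] at hb
    have e4 : ((n:ℝ)+1-n) = 1 := by ring
    have e5 : ((n:ℝ)-n) = 0 := by ring
    rw [e4, e5, Real.one_rpow, Real.zero_rpow (ne_of_gt h1α)] at hb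
    rw [Real.norm_eq_abs] at hb
    have hval : |(1 - 0) * τ ^ ((1:ℝ) - α) / (1 - α) * (M * τ)| = M * τ^((2:ℝ)-α) / (1-α) := by
      rw [abs_of_nonneg (by positivity), hτ2]
      ring
    have hb := hb.trans ((le_abs_self _).trans_eq hval)
    exact hb
  have hEjlt : ∀ j : ℕ, j < n → |∫ s in t j..t (j+1), w s * (deriv u s - δ j)|
      ≤ α * M * τ^((2:ℝ)-α) * ((↑(n-j):ℝ)) ^ (-1-α) := by
    intro j hj
    have hz : (∫ s in t j..t (j+1), (deriv u s - δ j)) = 0 := by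
      rw [intervalIntegral.integral_sub (hcont'.intervalIntegrable _ _)
        intervalIntegrable_const, hftc j, intervalIntegral.integral_const, hlen j, hδ]
      simp only [smul_eq_mul]
      field_simp
      ring
    have hrw : (∫ s in t j..t (j+1), w s * (deriv u s - δ j))
        = ∫ s in t j..t (j+1), (w s - w (t (j+1))) * (deriv u s - δ j) := by
      have hmul2 : EqOn (fun s => (w s - w (t (j+1))) * (deriv u s - δ j))
          (fun s => w s * (deriv u s - δ j) - w (t (j+1)) * (deriv u s - δ j))
          (uIcc (t j) (t (j+1))) := fun s _ => by simp only; ring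
      rw [intervalIntegral.integral_congr hmul2,
        intervalIntegral.integral_sub (hGi j _ _)
          (show IntervalIntegrable (fun s => w (t (j+1)) * (deriv u s - δ j)) volume _ _ from
            (continuous_const.mul (hcont'.sub continuous_const)).intervalIntegrable _ _),
        intervalIntegral.integral_const_mul, hz, mul_zero, sub_zero]
    rw [hrw]
    have hnjR : (0:ℝ) < (↑(n-j):ℝ) := by
      have : 0 < n - j := by omega
      exact_mod_cast this
    have hd : (0:ℝ) < (↑(n-j):ℝ) * τ := by positivity
    have hctj : c - t (j+1) = (↑(n-j):ℝ) * τ := by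
      rw [hcj (j+1) (by omega), Nat.cast_sub (le_of_lt hj)]
      push_cast
      ring
    have hwl : ∀ s ∈ Icc (t j) (t (j+1)),
        |w s - w (t (j+1))| ≤ α * ((↑(n-j):ℝ)*τ)^(-1-α) * τ := by
      intro s hs
      have hder : ∀ x ∈ Icc (t j) (t (j+1)),
          HasDerivWithinAt w (α * (c - x)^(-α-1)) (Icc (t j) (t (j+1))) x := by
        intro x hx
        have hxc : 0 < c - x := by
          have h6 : x ≤ t (j+1) := hx.2
          nlinarith [hctj]
        have h1 : HasDerivAt (fun y : ℝ => c - y) (-1) x := by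
          simpa using (hasDerivAt_id x).const_sub c
        have h2 : HasDerivAt (fun y : ℝ => y ^ (-α)) (-α * (c - x) ^ (-α - 1)) (c - x) :=
          Real.hasDerivAt_rpow_const (Or.inl (ne_of_gt hxc))
        have h3 := HasDerivAt.comp x h2 h1
        have h4 : HasDerivAt w (α * (c - x)^(-α-1)) x := by
          exact h3.congr_deriv (by ring)
        exact h4.hasDerivWithinAt
      have hbound : ∀ x ∈ Icc (t j) (t (j+1)),
          ‖α * (c - x)^(-α-1)‖ ≤ α * ((↑(n-j):ℝ)*τ)^(-1-α) := by
        intro x hx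
        have hxc : (↑(n-j):ℝ)*τ ≤ c - x := by
          have h6 : x ≤ t (j+1) := hx.2
          linarith [hctj]
        have hcx : 0 < c - x := lt_of_lt_of_le hd hxc
        rw [Real.norm_eq_abs, abs_of_nonneg (by positivity)]
        have h7 := Real.rpow_le_rpow_of_nonpos hd hxc (show -α-1 ≤ 0 by linarith)
        rw [show (-1-α : ℝ) = -α-1 by ring]
        nlinarith
      have key := Convex.norm_image_sub_le_of_norm_hasDerivWithin_le hder hbound
        (convex_Icc _ _) (right_mem_Icc.mpr (htlt j).le) hs
      have h5 : ‖s - t (j+1)‖ ≤ τ := by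
        rw [Real.norm_eq_abs, abs_le]
        constructor
        · linarith [hs.1, hlen j]
        · linarith [hs.2, hlen j]
      calc |w s - w (t (j+1))| ≤ (α * ((↑(n-j):ℝ)*τ)^(-1-α)) * ‖s - t (j+1)‖ := key
      _ ≤ α * ((↑(n-j):ℝ)*τ)^(-1-α) * τ := by
          have hp : (0:ℝ) ≤ α * ((↑(n-j):ℝ)*τ)^(-1-α) := by positivity
          nlinarith [Real.norm_eq_abs (s - t (j+1))]
    have hconst := intervalIntegral.norm_integral_le_of_norm_le_const
      (a := t j) (b := t (j+1)) (C := (α * ((↑(n-j):ℝ)*τ)^(-1-α) * τ) * (M * τ))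
      (f := fun s => (w s - w (t (j+1))) * (deriv u s - δ j)) ?_
    · rw [Real.norm_eq_abs] at hconst
      have hba : |t (j+1) - t j| = τ := by rw [hlen j, abs_of_pos hτ]
      rw [hba] at hconst
      have hmr : ((↑(n-j):ℝ)*τ)^(-1-α) = (↑(n-j):ℝ)^(-1-α) * τ^(-1-α) :=
        Real.mul_rpow hnjR.le hτ.le
      have hτc : τ^(-1-α) * τ * τ * τ = τ^((2:ℝ)-α) := by
        rw [show (2-α:ℝ) = (-1-α) + 3 by ring, Real.rpow_add hτ,
          show ((3:ℝ)) = ((3:ℕ):ℝ) by norm_num, Real.rpow_natCast]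
        ring
      calc |∫ s in t j..t (j+1), (w s - w (t (j+1))) * (deriv u s - δ j)|
          ≤ (α * ((↑(n-j):ℝ)*τ)^(-1-α) * τ) * (M * τ) * τ := hconst
      _ = α * M * (τ^(-1-α) * τ * τ * τ) * (↑(n-j):ℝ)^(-1-α) := by rw [hmr]; ring
      _ = α * M * τ^((2:ℝ)-α) * (↑(n-j):ℝ)^(-1-α) := by rw [hτc]
    · intro x hx
      have hxIcc : x ∈ Icc (t j) (t (j+1)) := by
        rw [uIoc_of_le (htlt j).le] at hx
        exact Ioc_subset_Icc_self hx
      rw [Real.norm_eq_abs, abs_mul]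
      exact mul_le_mul (hwl x hxIcc) (hgb j hj.le x hxIcc) (abs_nonneg _) (by positivity)
  -- total sum bound
  have hbig : ∑ j ∈ Finset.range (n+1), |∫ s in t j..t (j+1), w s * (deriv u s - δ j)|
      ≤ (1/(1-α) + α + 1) * (M * τ^((2:ℝ)-α)) := by
    rw [Finset.sum_range_succ]
    have h1 : ∑ j ∈ Finset.range n, |∫ s in t j..t (j+1), w s * (deriv u s - δ j)|
        ≤ ∑ j ∈ Finset.range n, α * M * τ^((2:ℝ)-α) * ((↑(n-j):ℝ)) ^ (-1-α) :=
      Finset.sum_le_sum (fun j hj => hEjlt j (Finset.mem_range.mp hj))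
    have h2 : ∑ j ∈ Finset.range n, α * M * τ^((2:ℝ)-α) * ((↑(n-j):ℝ)) ^ (-1-α)
        = α * M * τ^((2:ℝ)-α) * ∑ j ∈ Finset.range n, ((↑(n-j):ℝ)) ^ (-1-α) := by
      rw [Finset.mul_sum]
    have h3 : ∑ j ∈ Finset.range n, ((↑(n-j):ℝ)) ^ (-1-α)
        = ∑ j ∈ Finset.range n, ((j:ℝ)+1) ^ (-1-α) := by
      rw [← Finset.sum_range_reflect (fun j => ((j:ℝ)+1) ^ (-1-α)) n]
      apply Finset.sum_congr rfl
      intro j hj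
      have hj' := Finset.mem_range.mp hj
      congr 1
      have e : n - 1 - j + 1 = n - j := by omega
      exact_mod_cast (congrArg (Nat.cast (R := ℝ)) e).symm
    have h4 := zeta_bound α hα0 n
    have hpos : (0:ℝ) ≤ α * M * τ^((2:ℝ)-α) := by positivity
    have h5 : α * (1 + 1/α) = α + 1 := by field_simp
    have h6 := mul_le_mul_of_nonneg_left h4 hpos
    rw [h2, h3] at h1
    have h7 : M * τ^((2:ℝ)-α) / (1-α) + α * M * τ^((2:ℝ)-α) * (1 + 1/α)
        = (1/(1-α) + α + 1) * (M * τ^((2:ℝ)-α)) := by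
      field_simp
      ring
    linarith [h1.trans h6]
  have hfinal : |(1 / Real.Gamma (1 - α)) * (∫ s in (0:ℝ)..c, w s * deriv u s)
      - (1 / Real.Gamma (2 - α)) *
        (∑ j ∈ Finset.range (n + 1),
          (((j : ℝ) + 1) ^ (1 - α) - (j : ℝ) ^ (1 - α)) *
            (u (t (n + 1 - j)) - u (t (n - j))) / τ ^ α)|
      ≤ (1 / Real.Gamma (1 - α)) * (1/(1-α) + α + 1) * M * τ^((2:ℝ)-α) := by
    rw [hkey, abs_mul, abs_of_nonneg (by positivity : (0:ℝ) ≤ 1/Real.Gamma (1-α))]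
    calc (1/Real.Gamma (1-α)) * |∑ j ∈ Finset.range (n+1),
          ∫ s in t j..t (j+1), w s * (deriv u s - δ j)|
        ≤ (1/Real.Gamma (1-α)) * ((1/(1-α) + α + 1) * (M * τ^((2:ℝ)-α))) := by
          refine mul_le_mul_of_nonneg_left ?_ (by positivity)
          exact (Finset.abs_sum_le_sum_abs _ _).trans hbig
    _ = (1/Real.Gamma (1-α)) * (1/(1-α) + α + 1) * M * τ^((2:ℝ)-α) := by ring
  exact hfinal
end
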